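/- Let E be an extremally disconnected compact Hausdorff space admitting a continuous irreducible surjection onto the Cantor space. Let X be a compact Hausdorff F-space and let f : X → E be a continuous surjection such that every fiber f⁻¹(e) has at most 2 points. Then X has a nonempty clopen subset that, with the subspace topology, is homeomorphic to E. -/

import Mathlib

open Set Function

namespace Stmt13

/-- Basic cylinder sets in Cantor space. -/
def Cyl (l : List Bool) : Set (ℕ → Bool) := {x | ∀ i, i < l.length → x i = l.getD i false}

lemma cyl_nil : Cyl [] = univ := by
  ext x; simp [Cyl]

lemma cyl_isClopen (l : List Bool) : IsClopen (Cyl l) := by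
  have h : Cyl l = ⋂ i ∈ Finset.range l.length,
      (fun p : ℕ → Bool => p i) ⁻¹' {l.getD i false} := by
    ext x; simp [Cyl]
  constructor
  · rw [h]
    exact isClosed_biInter fun i _ =>
      (isClosed_discrete {l.getD i false}).preimage (continuous_apply i)
  · rw [h]
    exact isOpen_biInter_finset fun i _ =>
      (isOpen_discrete {l.getD i false}).preimage (continuous_apply i)

lemma mem_cyl_ofFn (n : ℕ) (x : ℕ → Bool) {y : ℕ → Bool}
    (h : y ∈ Cyl (List.ofFn (fun i : Fin n => x i))) : ∀ i < n, y i = x i := by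
  intro i hi
  have := h i (by simpa using hi)
  simpa [List.getD_eq_getElem?_getD, List.getElem?_ofFn, List.ofFnNthVal, dif_pos hi] using this

lemma self_mem_cyl_ofFn (n : ℕ) (x : ℕ → Bool) :
    x ∈ Cyl (List.ofFn (fun i : Fin n => x i)) := by
  intro i hi
  simp only [List.length_ofFn] at hi
  simp [List.getD_eq_getElem?_getD, List.getElem?_ofFn, List.ofFnNthVal, dif_pos hi]

lemma exists_cyl_subset {s : Set (ℕ → Bool)} (hs : IsOpen s) {x : ℕ → Bool} (hx : x ∈ s) :
    ∃ l, x ∈ Cyl l ∧ Cyl l ⊆ s := by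
  obtain ⟨I, u, hu, hsub⟩ := isOpen_pi_iff.mp hs x hx
  classical
  set n : ℕ := (I.sup id) + 1 with hn
  have hIlt : ∀ i ∈ I, i < n := fun i hi =>
    Nat.lt_succ_of_le (Finset.le_sup (f := id) hi)
  refine ⟨List.ofFn (fun i : Fin n => x i), self_mem_cyl_ofFn n x, ?_⟩
  intro y hy
  apply hsub
  intro i hi
  have : y i = x i := mem_cyl_ofFn n x hy i (hIlt i hi)
  rw [this]
  exact (hu i hi).2


/-- The appending homeomorphism between Cantor space and a cylinder. -/
noncomputable def cylHomeo (l : List Bool) : (ℕ → Bool) ≃ₜ ↥(Cyl l) := by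
  refine Continuous.homeoOfEquivCompactToT2 (f := ?_) ?_
  · refine
      { toFun := fun y => ⟨fun i => if h : i < l.length then l.getD i false else y (i - l.length),
          fun i hi => by simp [dif_pos hi]⟩
        invFun := fun x => fun j => (x : ℕ → Bool) (l.length + j)
        left_inv := ?_
        right_inv := ?_ }
    · intro y
      funext j
      have h : ¬ (l.length + j < l.length) := by omega
      simp [dif_neg h]
    · rintro ⟨x, hx⟩
      apply Subtype.ext
      funext i
      by_cases h : i < l.length
      · simpa [dif_pos h] using (hx i h).symm
      · have h2 : l.length + (i - l.length) = i := by omega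
        simp [dif_neg h, h2]
  · apply Continuous.subtype_mk
    apply continuous_pi
    intro i
    by_cases h : i < l.length
    · simp only [dif_pos h]; exact continuous_const
    · simp only [dif_neg h]; exact continuous_apply _

lemma clopen_extremallyDisconnected {E : Type*} [TopologicalSpace E] [ExtremallyDisconnected E]
    {B : Set E} (hB : IsClopen B) : ExtremallyDisconnected B := by
  constructor
  intro U hU
  obtain ⟨U₀, hU₀, rfl⟩ := isOpen_induced_iff.mp hU
  rw [Topology.IsEmbedding.subtypeVal.closure_eq_preimage_closure_image]
  have himg : (Subtype.val '' (Subtype.val ⁻¹' U₀) : Set E) = B ∩ U₀ :=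
    Subtype.image_preimage_coe B U₀
  rw [himg]
  exact (ExtremallyDisconnected.open_closure _ (hB.2.inter hU₀)).preimage continuous_subtype_val


/-- Uniqueness of the absolute: the preimage of a cylinder is homeomorphic to `E` itself. -/
lemma absHomeo {E : Type*} [TopologicalSpace E] [CompactSpace E] [T2Space E]
    [ExtremallyDisconnected E] {g : E → ℕ → Bool} (hg : Continuous g) (hgs : Surjective g)
    (hirr : ∀ A : Set E, IsClosed A → g '' A = univ → A = univ) (l : List Bool) :
    Nonempty (↥(g ⁻¹' Cyl l) ≃ₜ E) := by
  set B : Set E := g ⁻¹' Cyl l with hBdef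
  have hBclopen : IsClopen B := ⟨(cyl_isClopen l).1.preimage hg, (cyl_isClopen l).2.preimage hg⟩
  haveI : CompactSpace ↥B := isCompact_iff_compactSpace.mp hBclopen.1.isCompact
  haveI : ExtremallyDisconnected ↥B := clopen_extremallyDisconnected hBclopen
  set gB : ↥B → ℕ → Bool := fun x => (cylHomeo l).symm ⟨g x.1, x.2⟩ with hgBdef
  have hgBc : Continuous gB :=
    (cylHomeo l).symm.continuous.comp ((hg.comp continuous_subtype_val).subtype_mk _)
  have hgBs : Surjective gB := by
    intro z
    obtain ⟨e, he⟩ := hgs ((cylHomeo l) z).1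
    have heB : e ∈ B := by
      show g e ∈ Cyl l
      rw [he]; exact ((cylHomeo l) z).2
    refine ⟨⟨e, heB⟩, ?_⟩
    show (cylHomeo l).symm ⟨g e, heB⟩ = z
    have : (⟨g e, heB⟩ : ↥(Cyl l)) = (cylHomeo l) z := Subtype.ext he
    rw [this, Homeomorph.symm_apply_apply]
  have hgBzorn : ∀ C : Set ↥B, C ≠ univ → IsClosed C → gB '' C ≠ univ := by
    intro C hCne hCcl hCimg
    apply hCne
    have hvalC : IsClosed (Subtype.val '' C : Set E) :=
      (hCcl.isCompact.image continuous_subtype_val).isClosed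
    have hA : IsClosed ((Subtype.val '' C : Set E) ∪ Bᶜ) := hvalC.union hBclopen.2.isClosed_compl
    have hgA : g '' ((Subtype.val '' C : Set E) ∪ Bᶜ) = univ := by
      apply eq_univ_of_forall
      intro z
      by_cases hz : z ∈ Cyl l
      · -- z comes from the image of C
        have : ((cylHomeo l).symm ⟨z, hz⟩) ∈ gB '' C := hCimg ▸ mem_univ _
        obtain ⟨x, hxC, hx⟩ := this
        have : (⟨g x.1, x.2⟩ : ↥(Cyl l)) = ⟨z, hz⟩ := (cylHomeo l).symm.injective hx
        have hgx : g x.1 = z := congrArg Subtype.val this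
        exact ⟨x.1, Or.inl ⟨x, hxC, rfl⟩, hgx⟩
      · obtain ⟨e, he⟩ := hgs z
        refine ⟨e, Or.inr ?_, he⟩
        show ¬ g e ∈ Cyl l
        rw [he]; exact hz
    have := hirr _ hA hgA
    apply eq_univ_of_forall
    intro x
    have hx : x.1 ∈ (Subtype.val '' C : Set E) ∪ Bᶜ := this ▸ mem_univ _
    rcases hx with hx | hx
    · obtain ⟨x', hx'C, hx'⟩ := hx
      rwa [Subtype.ext hx'.symm]
    · exact absurd x.2 hx
  obtain ⟨psi, hpsic, hpsicomm'⟩ := CompactT2.ExtremallyDisconnected.projective (A := E)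
    (f := fun e => ULift.up.{u_1} (g e)) (g := fun x => ULift.up.{u_1} (gB x))
    (continuous_uliftUp.comp hg) (continuous_uliftUp.comp hgBc)
    ((ULift.up_surjective).comp hgBs)
  have hpsicomm : gB ∘ psi = g := by
    funext e
    have := congrFun hpsicomm' e
    simpa using this
  have hpsis : Surjective psi := by
    by_contra hns
    have hrancl : IsClosed (range psi) := (isCompact_range hpsic).isClosed
    have hrne : range psi ≠ univ := fun h => hns (range_eq_univ.mp h)
    apply hgBzorn _ hrne hrancl
    apply eq_univ_of_forall
    intro z
    obtain ⟨e, he⟩ := hgs z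
    exact ⟨psi e, mem_range_self e, (congrFun hpsicomm e).trans he⟩
  have hpsizorn : ∀ C : Set E, C ≠ univ → IsClosed C → psi '' C ≠ univ := by
    intro C hCne hCcl hCimg
    apply hCne
    apply hirr _ hCcl
    have : g '' C = gB '' (psi '' C) := by
      rw [image_image]
      exact image_congr fun e _ => (congrFun hpsicomm e).symm
    rw [this, hCimg, image_univ, range_eq_univ.mpr hgBs]
  exact ⟨(ExtremallyDisconnected.homeoCompactToT2 hpsic hpsis hpsizorn).symm⟩


end Stmt13

namespace Stmt13P

universe u v

variable {D : Type u} {A : Type v} [TopologicalSpace D] [TopologicalSpace A]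

/-- Universe-polymorphic copy of `exists_compact_surjective_zorn_subset`. -/
lemma exists_zorn_subset [T1Space A] [CompactSpace D] {π : D → A}
    (π_cont : Continuous π) (π_surj : π.Surjective) : ∃ E : Set D, CompactSpace E ∧ π '' E = univ ∧
    ∀ E₀ : Set E, E₀ ≠ univ → IsClosed E₀ → E.restrict π '' E₀ ≠ univ := by
  let S : Set <| Set D := {E : Set D | IsClosed E ∧ π '' E = univ}
  suffices ∀ (C : Set <| Set D) (_ : C ⊆ S) (_ : IsChain (· ⊆ ·) C), ∃ s ∈ S, ∀ c ∈ C, s ⊆ c by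
    rcases zorn_superset S this with ⟨E, E_min⟩
    obtain ⟨E_closed, E_surj⟩ := E_min.prop
    refine ⟨E, isCompact_iff_compactSpace.mp E_closed.isCompact, E_surj, ?_⟩
    intro E₀ E₀_min E₀_closed
    contrapose! E₀_min
    exact eq_univ_of_image_val_eq <|
      E_min.eq_of_subset ⟨E₀_closed.trans E_closed, image_image_val_eq_restrict_image ▸ E₀_min⟩
        image_val_subset
  intro C C_sub C_chain
  refine ⟨iInter (fun c : C => c), ⟨isClosed_iInter fun ⟨_, h⟩ => (C_sub h).left, ?_⟩,
    fun c hc _ h => mem_iInter.mp h ⟨c, hc⟩⟩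
  by_cases hC : Nonempty C
  · refine eq_univ_of_forall fun a => inter_nonempty_iff_exists_left.mp ?_
    refine iInter_inter (ι := C) (π ⁻¹' {a}) _ ▸
      IsCompact.nonempty_iInter_of_directed_nonempty_isCompact_isClosed _
      ?_ (fun c => ?_) (fun c => IsClosed.isCompact ?_) (fun c => ?_)
    · replace C_chain : IsChain (· ⊇ ·) C := C_chain.symm
      have : ∀ s t : Set D, s ⊇ t → s ∩ π ⁻¹' {a} ⊇ t ∩ π ⁻¹' {a} := fun _ _ h => inter_subset_inter_left (π ⁻¹' {a}) h
      exact Directed.mono_comp (fun s t : Set D => s ⊇ t) this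
        (directedOn_iff_directed.mp (IsChain.directedOn C_chain) : Directed (fun s t : Set D => s ⊇ t) (fun c : C => (c : Set D)))
    · rw [← image_inter_nonempty_iff, (C_sub c.mem).right, univ_inter]
      exact singleton_nonempty a
    all_goals exact (C_sub c.mem).left.inter <| (T1Space.t1 a).preimage π_cont
  · rw [@iInter_of_empty _ _ <| not_nonempty_iff.mp hC, image_univ_of_surjective π_surj]

/-- Universe-polymorphic copy of Gleason's Lemma 2.1. -/
lemma image_subset_closure_compl_image_compl' {ρ : D → A} (ρ_cont : Continuous ρ)
    (ρ_surj : ρ.Surjective) (zorn_subset : ∀ E₀ : Set D, E₀ ≠ univ → IsClosed E₀ → ρ '' E₀ ≠ univ)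
    {G : Set D} (hG : IsOpen G) : ρ '' G ⊆ closure ((ρ '' Gᶜ)ᶜ) := by
  by_cases G_empty : G = ∅
  · simpa only [G_empty, image_empty] using empty_subset _
  · intro a ha
    rw [mem_closure_iff]
    intro N N_open hN
    rcases (G.mem_image ρ a).mp ha with ⟨e, he, rfl⟩
    have nonempty : (G ∩ ρ ⁻¹' N).Nonempty := ⟨e, mem_inter he <| mem_preimage.mpr hN⟩
    have is_open : IsOpen <| G ∩ ρ ⁻¹' N := hG.inter <| N_open.preimage ρ_cont
    have ne_univ : ρ '' (G ∩ ρ ⁻¹' N)ᶜ ≠ univ :=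
      zorn_subset _ (compl_ne_univ.mpr nonempty) is_open.isClosed_compl
    rcases nonempty_compl.mpr ne_univ with ⟨x, hx⟩
    have hx' : x ∈ (ρ '' Gᶜ)ᶜ := fun h => hx <| image_mono (f := ρ) (by simp) h
    rcases ρ_surj x with ⟨y, rfl⟩
    have hy : y ∈ G ∩ ρ ⁻¹' N := by simpa using mt (mem_image_of_mem ρ) <| mem_compl hx
    exact ⟨ρ y, mem_inter (mem_preimage.mp <| mem_of_mem_inter_right hy) hx'⟩

/-- Universe-polymorphic copy of Gleason's Lemma 2.3. -/
noncomputable def homeoCompactToT2' [ExtremallyDisconnected A] [T2Space A]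
    [T2Space D] [CompactSpace D] {ρ : D → A} (ρ_cont : Continuous ρ) (ρ_surj : ρ.Surjective)
    (zorn_subset : ∀ E₀ : Set D, E₀ ≠ univ → IsClosed E₀ → ρ '' E₀ ≠ univ) : D ≃ₜ A := by
  have inj : ρ.Injective := by
    intro x₁ x₂ hρx
    by_contra hx
    rcases t2_separation hx with ⟨G₁, G₂, G₁_open, G₂_open, hx₁, hx₂, disj⟩
    have G₁_comp : IsCompact G₁ᶜ := IsClosed.isCompact G₁_open.isClosed_compl
    have G₂_comp : IsCompact G₂ᶜ := IsClosed.isCompact G₂_open.isClosed_compl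
    have G₁_open' : IsOpen (ρ '' G₁ᶜ)ᶜ := (G₁_comp.image ρ_cont).isClosed.isOpen_compl
    have G₂_open' : IsOpen (ρ '' G₂ᶜ)ᶜ := (G₂_comp.image ρ_cont).isClosed.isOpen_compl
    have disj' : Disjoint (ρ '' G₁ᶜ)ᶜ (ρ '' G₂ᶜ)ᶜ := by
      rw [disjoint_iff_inter_eq_empty, ← compl_union, ← image_union, ← compl_inter,
        disjoint_iff_inter_eq_empty.mp disj, compl_empty, compl_empty_iff,
        image_univ_of_surjective ρ_surj]
    have disj'' : Disjoint (closure (ρ '' G₁ᶜ)ᶜ) (closure (ρ '' G₂ᶜ)ᶜ) :=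
      ExtremallyDisconnected.disjoint_closure_of_disjoint_isOpen disj' G₁_open' G₂_open'
    have hx₁' := image_subset_closure_compl_image_compl' ρ_cont ρ_surj zorn_subset G₁_open <|
      mem_image_of_mem ρ hx₁
    have hx₂' := image_subset_closure_compl_image_compl' ρ_cont ρ_surj zorn_subset G₂_open <|
      mem_image_of_mem ρ hx₂
    exact disj''.ne_of_mem hx₁' hx₂' hρx
  exact ρ_cont.homeoOfEquivCompactToT2 (f := Equiv.ofBijective ρ ⟨inj, ρ_surj⟩)

end Stmt13P

/-- An Fσ-set is a countable union of closed sets. -/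
def IsFSigma {X : Type*} [TopologicalSpace X] (A : Set X) : Prop :=
  ∃ F : ℕ → Set X, (∀ n, IsClosed (F n)) ∧ A = ⋃ n, F n

/-- An F-space: disjoint open Fσ-sets have disjoint closures. -/
def IsFSpace (X : Type*) [TopologicalSpace X] : Prop :=
  ∀ U V : Set X, IsOpen U → IsOpen V → IsFSigma U → IsFSigma V → Disjoint U V →
    Disjoint (closure U) (closure V)

open Set Function

/-- If `E` is an extremally disconnected compact Hausdorff space admitting a continuous
irreducible surjection onto the Cantor space, and the compact Hausdorff F-space `X` maps
onto `E` by an at most 2-to-1 continuous map, then `X` has a nonempty clopen subset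
homeomorphic to `E`. -/
theorem statement13 {E : Type*} [TopologicalSpace E] [CompactSpace E] [T2Space E]
    [ExtremallyDisconnected E]
    (hE : ∃ g : E → (ℕ → Bool), Continuous g ∧ Function.Surjective g ∧
      ∀ A : Set E, IsClosed A → g '' A = Set.univ → A = Set.univ)
    {X : Type*} [TopologicalSpace X] [CompactSpace X] [T2Space X]
    (hX : IsFSpace X)
    (f : X → E) (hf : Continuous f) (hfs : Function.Surjective f)
    (hfib : ∀ e : E, (f ⁻¹' {e}).encard ≤ 2) :
    ∃ K : Set X, IsClopen K ∧ K.Nonempty ∧ Nonempty (↥K ≃ₜ E) := by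
  classical
  obtain ⟨g, hg, hgs, hgirr⟩ := hE
  -- the canonical countable π-base of `E`
  set Bs : List Bool → Set E := fun l => g ⁻¹' (Stmt13.Cyl l) with hBsdef
  have hBsclopen : ∀ l, IsClopen (Bs l) := fun l =>
    ⟨(Stmt13.cyl_isClopen l).1.preimage hg, (Stmt13.cyl_isClopen l).2.preimage hg⟩
  have hBsne : ∀ l, (Bs l).Nonempty := by
    intro l
    obtain ⟨e, he⟩ := hgs (fun i => l.getD i false)
    exact ⟨e, by show g e ∈ Stmt13.Cyl l; rw [he]; intro i _; rfl⟩
  have hBsnil : ∀ e : E, e ∈ Bs [] := by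
    intro e
    show g e ∈ Stmt13.Cyl []
    rw [Stmt13.cyl_nil]; trivial
  have pibase : ∀ U : Set E, IsOpen U → U.Nonempty → ∃ l, Bs l ⊆ U := by
    rintro U hU ⟨e, heU⟩
    have hclosed : IsClosed Uᶜ := hU.isClosed_compl
    have himg : g '' Uᶜ ≠ univ := by
      intro h
      exact (eq_univ_iff_forall.mp (hgirr _ hclosed h) e) heU
    have hopen : IsOpen (g '' Uᶜ)ᶜ := (hclosed.isCompact.image hg).isClosed.isOpen_compl
    obtain ⟨z, hz⟩ := nonempty_compl.mpr himg
    obtain ⟨l, _, hlsub⟩ := Stmt13.exists_cyl_subset hopen hz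
    refine ⟨l, fun x hx => ?_⟩
    by_contra hxU
    exact (hlsub hx) ⟨x, hxU, rfl⟩
  -- the minimal section sheet `K`
  obtain ⟨K, hKcs, hKsurj, hKzorn⟩ := Stmt13P.exists_zorn_subset hf hfs
  haveI := hKcs
  have hKclosed : IsClosed K := (isCompact_iff_compactSpace.mpr hKcs).isClosed
  have hKres_surj : Surjective (K.restrict f) := by
    intro e
    have : e ∈ f '' K := hKsurj ▸ mem_univ e
    obtain ⟨x, hx, hxe⟩ := this
    exact ⟨⟨x, hx⟩, hxe⟩
  set h₀ : ↥K ≃ₜ E := Stmt13P.homeoCompactToT2' (ρ := K.restrict f)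
    (hf.comp continuous_subtype_val) hKres_surj hKzorn with hh₀
  set s : E → X := fun e => ((h₀.symm e : ↥K) : X) with hsdef
  have hscont : Continuous s := continuous_subtype_val.comp h₀.symm.continuous
  have hsK : ∀ e, s e ∈ K := fun e => (h₀.symm e).2
  have hfs_id : ∀ e, f (s e) = e := fun e => h₀.apply_symm_apply e
  have hsfK : ∀ x ∈ K, s (f x) = x := by
    intro x hx
    show ((h₀.symm (f x)) : X) = x
    have h1 : h₀ ⟨x, hx⟩ = f x := rfl
    rw [← h1, h₀.symm_apply_apply]
  set W : Set X := Kᶜ with hWdef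
  have hWopen : IsOpen W := hKclosed.isOpen_compl
  -- at most two points in each fiber
  have card3 : ∀ (e : E) (x y z : X), f x = e → f y = e → f z = e →
      x ≠ y → x ≠ z → y ≠ z → False := by
    intro e x y z hx hy hz hxy hxz hyz
    have hsub : ({x, y, z} : Set X) ⊆ f ⁻¹' {e} := by
      rintro w (rfl | rfl | rfl) <;> simp [hx, hy, hz]
    have h3 : ({x, y, z} : Set X).encard = 3 := by
      rw [Set.encard_insert_of_notMem (by simp [hxy, hxz]), Set.encard_pair hyz]
      norm_num
    have hle := (Set.encard_mono hsub).trans (hfib e)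
    rw [h3] at hle
    norm_num at hle
  -- helper producing the final clopen copy from a clopen piece of the section sheet
  have finishing : ∀ (m : List Bool) (S : Set X), IsClopen S → S.Nonempty →
      (∀ x ∈ S, f x ∈ Bs m) → (∀ x ∈ S, s (f x) = x) → (∀ e ∈ Bs m, s e ∈ S) →
      ∃ K' : Set X, IsClopen K' ∧ K'.Nonempty ∧ Nonempty (↥K' ≃ₜ E) := by
    intro m S hS hSne hmap hsec hfull
    haveI : CompactSpace ↥S := isCompact_iff_compactSpace.mp hS.1.isCompact
    have hbij : Bijective (fun x : ↥S => (⟨f x.1, hmap x.1 x.2⟩ : ↥(Bs m))) := by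
      constructor
      · rintro x y hxy
        apply Subtype.ext
        have h1 : f x.1 = f y.1 := congrArg Subtype.val hxy
        rw [← hsec x.1 x.2, ← hsec y.1 y.2, h1]
      · rintro ⟨e, he⟩
        refine ⟨⟨s e, hfull e he⟩, Subtype.ext ?_⟩
        exact hfs_id e
    have hcont : Continuous (fun x : ↥S => (⟨f x.1, hmap x.1 x.2⟩ : ↥(Bs m))) :=
      (hf.comp continuous_subtype_val).subtype_mk _
    have h1 : ↥S ≃ₜ ↥(Bs m) :=
      Continuous.homeoOfEquivCompactToT2 (f := Equiv.ofBijective _ hbij) hcont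
    obtain ⟨h2⟩ := Stmt13.absHomeo hg hgs hgirr m
    exact ⟨S, hS, hSne, ⟨h1.trans h2⟩⟩
  -- MAIN DICHOTOMY: property (**)
  by_cases hQ : ∀ l : List Bool, ∀ A : Set X, IsClosed A → Bs l ⊆ f '' A → ∀ e ∈ Bs l, s e ∈ A
  · -- property (**) holds
    by_cases hI : ∃ l, Disjoint (Bs l) (f '' (K ∩ closure W))
    · -- CASE I: a piece of the section sheet away from the closure of `W` is clopen
      obtain ⟨l, hl⟩ := hI
      set S : Set X := K ∩ f ⁻¹' (Bs l) with hSdef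
      have hSmem : ∀ e ∈ Bs l, s e ∈ S := by
        intro e he
        exact ⟨hsK e, by show f (s e) ∈ Bs l; rw [hfs_id]; exact he⟩
      have hSclosed : IsClosed S := hKclosed.inter ((hBsclopen l).1.preimage hf)
      have hSopen : IsOpen S := by
        have hST : S = f ⁻¹' (Bs l) ∩ (closure W)ᶜ := by
          apply Subset.antisymm
          · rintro x ⟨hxK, hxB⟩
            refine ⟨hxB, fun hxW => ?_⟩
            exact (disjoint_left.mp hl hxB) ⟨x, ⟨hxK, hxW⟩, rfl⟩
          · rintro x ⟨hxB, hxW⟩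
            have hxK : x ∈ K := by
              by_contra hK'
              exact hxW (subset_closure hK')
            exact ⟨hxK, hxB⟩
        rw [hST]
        exact ((hBsclopen l).2.preimage hf).inter isClosed_closure.isOpen_compl
      obtain ⟨e₁, he₁⟩ := hBsne l
      refine finishing l S ⟨hSclosed, hSopen⟩ ⟨s e₁, hSmem e₁ he₁⟩ ?_ ?_ hSmem
      · rintro x ⟨_, hxB⟩
        exact hxB
      · rintro x ⟨hxK, _⟩
        exact hsfK x hxK
    · -- CASE II: `K ⊆ closure W`; derive a contradiction using the F-space property
      push_neg at hI
      exfalso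
      have hKW : K ⊆ closure W := by
        have hZ : f '' (K ∩ closure W) = univ := by
          by_contra hne
          have hcl : IsClosed (f '' (K ∩ closure W)) :=
            ((hKclosed.inter isClosed_closure).isCompact.image hf).isClosed
          obtain ⟨l, hlsub⟩ := pibase _ hcl.isOpen_compl (nonempty_compl.mpr hne)
          exact hI l (disjoint_left.mpr fun e he₁ he₂ => (hlsub he₁) he₂)
        intro x hx
        have hmem : f x ∈ f '' (K ∩ closure W) := hZ ▸ mem_univ _
        obtain ⟨y, ⟨hyK, hyW⟩, hyx⟩ := hmem
        have : y = x := by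
          have h1 := hsfK y hyK
          have h2 := hsfK x hx
          rw [hyx] at h1
          rw [← h1, h2]
        rwa [← this]
      have hDdense : ∀ l : List Bool, ∃ x, x ∈ W ∧ f x ∈ Bs l := by
        intro l
        obtain ⟨e, he⟩ := hBsne l
        have hse : s e ∈ closure W := hKW (hsK e)
        rw [mem_closure_iff] at hse
        have hmem : s e ∈ f ⁻¹' (Bs l) := by
          show f (s e) ∈ Bs l
          rw [hfs_id]; exact he
        obtain ⟨w, hw1, hw2⟩ := hse _ ((hBsclopen l).2.preimage hf) hmem
        exact ⟨w, hw2, hw1⟩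
      -- enumeration of the π-base hitting every element at both parities
      set dec : ℕ → List Bool := fun n => ((Encodable.decode n : Option (List Bool)).getD []) with hdecdef
      have hdec : ∀ l : List Bool, ∃ n : ℕ, dec n = l := by
        intro l
        exact ⟨Encodable.encode l, by simp [hdecdef]⟩
      set c : ℕ → List Bool := fun n => dec (n / 2) with hcdef
      -- one step of the recursive construction
      have step : ∀ (l : List Bool) (C : Set X), ∃ G : Set X,
          IsClosed C → C ⊆ W →
          IsOpen G ∧ (∃ F : ℕ → Set X, (∀ k, IsClosed (F k)) ∧ G = ⋃ k, F k) ∧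
          closure G ⊆ (W ∩ f ⁻¹' (Bs l)) ∩ Cᶜ ∧ (∃ e ∈ Bs l, e ∈ f '' G) := by
        intro l C
        by_cases hyp : IsClosed C ∧ C ⊆ W
        · obtain ⟨hCcl, hCW⟩ := hyp
          have himg_cl : IsClosed (f '' C) := (hCcl.isCompact.image hf).isClosed
          have hnotsub : ¬ (Bs l ⊆ f '' C) := by
            intro hsub
            obtain ⟨e, he⟩ := hBsne l
            exact (hCW (hQ l C hCcl hsub e he)) (hsK e)
          have hU₁ : IsOpen (Bs l \ f '' C) := (hBsclopen l).2.sdiff himg_cl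
          have hU₁ne : (Bs l \ f '' C).Nonempty := diff_nonempty.mpr hnotsub
          obtain ⟨l', hl'sub⟩ := pibase _ hU₁ hU₁ne
          obtain ⟨x, hxW, hxB⟩ := hDdense l'
          set Ω : Set X := (W ∩ f ⁻¹' (Bs l)) ∩ Cᶜ with hΩdef
          have hxΩ : x ∈ Ω :=
            ⟨⟨hxW, (hl'sub hxB).1⟩, fun hxC => (hl'sub hxB).2 ⟨x, hxC, rfl⟩⟩
          have hΩopen : IsOpen Ω :=
            (hWopen.inter ((hBsclopen l).2.preimage hf)).inter hCcl.isOpen_compl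
          obtain ⟨η, hη0, hη1, hη01⟩ := exists_continuous_zero_one_of_isClosed
            hΩopen.isClosed_compl (isClosed_singleton (x := x))
            (disjoint_singleton_right.mpr (fun h => h hxΩ))
          refine ⟨{y | 1/2 < η y}, fun _ _ => ⟨?_, ⟨fun k => {y | 1/2 + (1/(k+1) : ℝ) ≤ η y}, ?_, ?_⟩, ?_, ?_⟩⟩
          · exact isOpen_lt continuous_const η.continuous
          · exact fun k => isClosed_le continuous_const η.continuous
          · ext y
            simp only [mem_setOf_eq, mem_iUnion]
            constructor
            · intro hy
              obtain ⟨k, hk⟩ := exists_nat_one_div_lt (show (0:ℝ) < η y - 1/2 by linarith)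
              exact ⟨k, by linarith⟩
            · rintro ⟨k, hk⟩
              have : (0:ℝ) < 1/(k+1) := by positivity
              linarith
          · have h1 : closure {y | 1/2 < η y} ⊆ {y | 1/2 ≤ η y} :=
              closure_minimal (fun y (hy : 1/2 < η y) => (le_of_lt hy : y ∈ {y | 1/2 ≤ η y})) (isClosed_le continuous_const η.continuous)
            intro y hy
            by_contra hyΩ
            have h2 : (1:ℝ)/2 ≤ η y := h1 hy
            have h3 : η y = 0 := by simpa using hη0 hyΩ
            rw [h3] at h2
            norm_num at h2
          · refine ⟨f x, (hl'sub hxB).1, x, ?_, rfl⟩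
            show (1:ℝ)/2 < η x
            rw [hη1 rfl]
            norm_num
        · exact ⟨∅, fun h1 h2 => absurd ⟨h1, h2⟩ hyp⟩
      choose pick hpick using step
      -- the recursively constructed disjoint family
      set Sig : ℕ → Set X := fun n => Nat.rec ∅ (fun m S => S ∪ closure (pick (c m) S)) n
        with hSigdef
      have hSig0 : Sig 0 = ∅ := rfl
      have hSigS : ∀ n, Sig (n + 1) = Sig n ∪ closure (pick (c n) (Sig n)) := fun n => rfl
      set G : ℕ → Set X := fun n => pick (c n) (Sig n) with hGdef
      have hSiginv : ∀ n, IsClosed (Sig n) ∧ Sig n ⊆ W := by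
        intro n
        induction n with
        | zero => exact ⟨by rw [hSig0]; exact isClosed_empty, by rw [hSig0]; exact empty_subset _⟩
        | succ m ih =>
          have hp := hpick (c m) (Sig m) ih.1 ih.2
          rw [hSigS m]
          exact ⟨ih.1.union isClosed_closure,
            union_subset ih.2 (hp.2.2.1.trans (inter_subset_left.trans inter_subset_left))⟩
      have hGprops : ∀ n, IsOpen (G n) ∧
          (∃ F : ℕ → Set X, (∀ k, IsClosed (F k)) ∧ G n = ⋃ k, F k) ∧
          closure (G n) ⊆ (W ∩ f ⁻¹' (Bs (c n))) ∩ (Sig n)ᶜ ∧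
          (∃ e ∈ Bs (c n), e ∈ f '' (G n)) :=
        fun n => hpick (c n) (Sig n) (hSiginv n).1 (hSiginv n).2
      have hSigmono : ∀ {a b : ℕ}, a ≤ b → Sig a ⊆ Sig b := by
        intro a b h
        induction h with
        | refl => exact subset_rfl
        | @step b' hb' ih =>
            exact ih.trans (by rw [hSigS b']; exact subset_union_left)
      have hGsub : ∀ n, closure (G n) ⊆ Sig (n + 1) := by
        intro n
        rw [hSigS n]
        exact subset_union_right
      have hGdisj : ∀ {a b : ℕ}, a < b → Disjoint (G a) (G b) := by
        intro a b hab
        have h1 : G a ⊆ Sig b := (subset_closure.trans (hGsub a)).trans (hSigmono hab)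
        have h2 : Disjoint (Sig b) (G b) := by
          rw [disjoint_comm]
          refine disjoint_left.mpr fun x hx hx2 => ?_
          exact ((hGprops b).2.2.1 (subset_closure hx)).2 hx2
        exact h2.mono_left h1
      set U : Set X := ⋃ n, G (2 * n) with hUdef
      set V : Set X := ⋃ n, G (2 * n + 1) with hVdef
      have hUopen : IsOpen U := isOpen_iUnion fun n => (hGprops _).1
      have hVopen : IsOpen V := isOpen_iUnion fun n => (hGprops _).1
      -- Fσ witnesses
      choose Ffam hF1 hF2 using fun n => (hGprops n).2.1
      have hUF : IsFSigma U := by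
        refine ⟨fun m => Ffam (2 * (Nat.unpair m).1) (Nat.unpair m).2, fun m => hF1 _ _, ?_⟩
        apply Subset.antisymm
        · rintro x hx
          obtain ⟨n, hn⟩ := mem_iUnion.mp hx
          rw [hF2 (2 * n)] at hn
          obtain ⟨k, hk⟩ := mem_iUnion.mp hn
          exact mem_iUnion.mpr ⟨Nat.pair n k, by rw [Nat.unpair_pair]; exact hk⟩
        · rintro x hx
          obtain ⟨m, hm⟩ := mem_iUnion.mp hx
          refine mem_iUnion.mpr ⟨(Nat.unpair m).1, ?_⟩
          rw [hF2 (2 * (Nat.unpair m).1)]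
          exact mem_iUnion.mpr ⟨(Nat.unpair m).2, hm⟩
      have hVF : IsFSigma V := by
        refine ⟨fun m => Ffam (2 * (Nat.unpair m).1 + 1) (Nat.unpair m).2, fun m => hF1 _ _, ?_⟩
        apply Subset.antisymm
        · rintro x hx
          obtain ⟨n, hn⟩ := mem_iUnion.mp hx
          rw [hF2 (2 * n + 1)] at hn
          obtain ⟨k, hk⟩ := mem_iUnion.mp hn
          exact mem_iUnion.mpr ⟨Nat.pair n k, by rw [Nat.unpair_pair]; exact hk⟩
        · rintro x hx
          obtain ⟨m, hm⟩ := mem_iUnion.mp hx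
          refine mem_iUnion.mpr ⟨(Nat.unpair m).1, ?_⟩
          rw [hF2 (2 * (Nat.unpair m).1 + 1)]
          exact mem_iUnion.mpr ⟨(Nat.unpair m).2, hm⟩
      have hUV : Disjoint U V := by
        rw [disjoint_iUnion_left]
        intro n
        rw [disjoint_iUnion_right]
        intro m
        rcases lt_or_gt_of_ne (show 2 * n ≠ 2 * m + 1 by omega) with h | h
        · exact hGdisj h
        · exact (hGdisj h).symm
      have hclUV : Disjoint (closure U) (closure V) := hX U V hUopen hVopen hUF hVF hUV
      -- both closures contain all of `K`
      have hcover : ∀ (P : ℕ → ℕ), (∀ l, ∃ n, c (P n) = l) →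
          Bs [] ⊆ f '' closure (⋃ n, G (P n)) := by
        intro P hP e _
        by_contra he
        have hcl : IsClosed (f '' closure (⋃ n, G (P n))) :=
          (isClosed_closure.isCompact.image hf).isClosed
        obtain ⟨l, hlsub⟩ := pibase _ hcl.isOpen_compl ⟨e, he⟩
        obtain ⟨n, hn⟩ := hP l
        obtain ⟨e', he'B, x', hx'G, hx'e⟩ := (hGprops (P n)).2.2.2
        rw [hn] at he'B
        have hmem : e' ∈ f '' closure (⋃ n, G (P n)) :=
          ⟨x', subset_closure (mem_iUnion.mpr ⟨n, hx'G⟩), hx'e⟩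
        exact (hlsub he'B) hmem
      have hc_even : ∀ l, ∃ n, c (2 * n) = l := by
        intro l
        obtain ⟨n, hn⟩ := hdec l
        refine ⟨n, ?_⟩
        show dec (2 * n / 2) = l
        rw [show 2 * n / 2 = n by omega]
        exact hn
      have hc_odd : ∀ l, ∃ n, c (2 * n + 1) = l := by
        intro l
        obtain ⟨n, hn⟩ := hdec l
        refine ⟨n, ?_⟩
        show dec ((2 * n + 1) / 2) = l
        rw [show (2 * n + 1) / 2 = n by omega]
        exact hn
      obtain ⟨e⟩ : Nonempty E := ⟨(hgs (fun _ => false)).choose⟩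
      have hsU : s e ∈ closure U :=
        hQ [] (closure U) isClosed_closure (hcover (fun n => 2 * n) hc_even) e (hBsnil e)
      have hsV : s e ∈ closure V :=
        hQ [] (closure V) isClosed_closure (hcover (fun n => 2 * n + 1) hc_odd) e (hBsnil e)
      exact (disjoint_left.mp hclUV hsU) hsV
  · -- (**) fails: we obtain a second continuous section over some `Bs l`
    push_neg at hQ
    obtain ⟨l, A, hAcl, hAcov, e₀, he₀, hse₀⟩ := hQ
    set A' : Set X := A ∩ f ⁻¹' (Bs l) with hA'def
    have hA'cl : IsClosed A' := hAcl.inter ((hBsclopen l).1.preimage hf)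
    haveI : CompactSpace ↥A' := isCompact_iff_compactSpace.mp hA'cl.isCompact
    haveI : CompactSpace ↥(Bs l) := isCompact_iff_compactSpace.mp (hBsclopen l).1.isCompact
    haveI : ExtremallyDisconnected ↥(Bs l) := Stmt13.clopen_extremallyDisconnected (hBsclopen l)
    set π : ↥A' → ↥(Bs l) := fun x => ⟨f x.1, x.2.2⟩ with hπdef
    have hπcont : Continuous π := (hf.comp continuous_subtype_val).subtype_mk _
    have hπsurj : Surjective π := by
      rintro ⟨e, he⟩
      obtain ⟨x, hxA, hxe⟩ := hAcov he
      exact ⟨⟨x, hxA, by show f x ∈ Bs l; rw [hxe]; exact he⟩, Subtype.ext hxe⟩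
    obtain ⟨M, hMcs, hMsurj, hMzorn⟩ := Stmt13P.exists_zorn_subset hπcont hπsurj
    haveI := hMcs
    have hMres_surj : Surjective (M.restrict π) := by
      intro e
      have : e ∈ π '' M := hMsurj ▸ mem_univ e
      obtain ⟨x, hx, hxe⟩ := this
      exact ⟨⟨x, hx⟩, hxe⟩
    set hM : ↥M ≃ₜ ↥(Bs l) := Stmt13P.homeoCompactToT2' (ρ := M.restrict π)
      (hπcont.comp continuous_subtype_val) hMres_surj hMzorn with hhM
    set σ : ↥(Bs l) → X := fun e => (((hM.symm e : ↥A') : X)) with hσdef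
    have hσcont : Continuous σ :=
      continuous_subtype_val.comp (continuous_subtype_val.comp hM.symm.continuous)
    have hσA' : ∀ e, σ e ∈ A' := fun e => ((hM.symm e : ↥A')).2
    have hfσ : ∀ e, f (σ e) = (e : E) := by
      intro e
      have h1 : (M.restrict π) (hM.symm e) = e := hM.apply_symm_apply e
      exact congrArg Subtype.val h1
    have hσW : σ ⟨e₀, he₀⟩ ∈ W := by
      intro hK'
      apply hse₀
      have h1 : s e₀ = σ ⟨e₀, he₀⟩ := by
        have h2 := hsfK _ hK'
        rwa [hfσ ⟨e₀, he₀⟩] at h2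
      rw [h1]
      exact (hσA' _).1
    -- the open set of points where the second section lands in `W`
    set O : Set E := Subtype.val '' (σ ⁻¹' W) with hOdef
    have hOopen : IsOpen O :=
      ((hBsclopen l).2.isOpenMap_subtype_val) _ (hWopen.preimage hσcont)
    have hOne : O.Nonempty := ⟨e₀, ⟨⟨e₀, he₀⟩, hσW, rfl⟩⟩
    obtain ⟨m, hmsub⟩ := pibase O hOopen hOne
    have hOBl : O ⊆ Bs l := by
      rintro e ⟨e', _, rfl⟩
      exact e'.2
    have hBml : Bs m ⊆ Bs l := hmsub.trans hOBl
    have hσWm : ∀ e (he : e ∈ Bs m), σ ⟨e, hBml he⟩ ∈ W := by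
      intro e he
      obtain ⟨e', he'W, he'⟩ := hmsub he
      have : e' = ⟨e, hBml he⟩ := Subtype.ext he'
      rwa [← this]
    set T : Set X := σ '' (Subtype.val ⁻¹' (Bs m)) with hTdef
    have hTcpt : IsCompact T :=
      (((hBsclopen m).1.preimage continuous_subtype_val).isCompact).image hσcont
    have hTW : T ⊆ W := by
      rintro x ⟨⟨e, hel⟩, hem, rfl⟩
      exact hσWm e hem
    set S : Set X := s '' (Bs m) with hSdef
    have hSK : S ⊆ K := by
      rintro x ⟨e, _, rfl⟩
      exact hsK e
    have key : f ⁻¹' (Bs m) = S ∪ T := by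
      apply Subset.antisymm
      · intro x hx
        by_cases hxs : x = s (f x)
        · exact Or.inl ⟨f x, hx, hxs.symm⟩
        · right
          set y := σ ⟨f x, hBml hx⟩ with hydef
          have hyW : y ∈ W := hσWm _ hx
          have hfy : f y = f x := hfσ _
          have hyne : y ≠ s (f x) := by
            intro h
            exact hyW (h ▸ hsK (f x))
          by_cases hxy : x = y
          · exact hxy ▸ ⟨⟨f x, hBml hx⟩, hx, rfl⟩
          · exact (card3 (f x) (s (f x)) x y (hfs_id _) rfl hfy
                (fun h => hxs h.symm) (Ne.symm hyne) hxy).elim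
      · rintro x (⟨e, he, rfl⟩ | ⟨⟨e, hel⟩, hem, rfl⟩)
        · show f (s e) ∈ Bs m
          rw [hfs_id]; exact he
        · show f (σ _) ∈ Bs m
          rw [hfσ]; exact hem
    have hSclosed : IsClosed S := ((hBsclopen m).1.isCompact.image hscont).isClosed
    have hSopen : IsOpen S := by
      have hST : S = f ⁻¹' (Bs m) ∩ Tᶜ := by
        apply Subset.antisymm
        · intro x hxS
          refine ⟨by rw [key]; exact Or.inl hxS, fun hxT => ?_⟩
          exact (hTW hxT) (hSK hxS)
        · rintro x ⟨hx1, hx2⟩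
          have hx1' : x ∈ S ∪ T := by rw [← key]; exact hx1
          rcases hx1' with h | h
          · exact h
          · exact absurd h hx2
      rw [hST]
      exact ((hBsclopen m).2.preimage hf).inter hTcpt.isClosed.isOpen_compl
    obtain ⟨e₁, he₁⟩ := hBsne m
    refine finishing m S ⟨hSclosed, hSopen⟩ ⟨s e₁, e₁, he₁, rfl⟩ ?_ ?_ ?_
    · rintro x ⟨e, he, rfl⟩
      show f (s e) ∈ Bs m
      rw [hfs_id]; exact he
    · intro x hx
      exact hsfK x (hSK hx)
    · intro e he
      exact ⟨e, he, rfl⟩
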